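/- Let F : ℝ → ℝ be smooth and define, on the open set of points (t, x₁, v₁, x₂, v₂) ∈ ℝ⁵ with x₁ ≠ 0 and x₂ ≠ 0, the function I(t, x₁, v₁, x₂, v₂) = e^{2F(t)}(x₁v₂ − x₂v₁)² + (x₁/x₂)² + (x₂/x₁)². Then: (i) ∂I/∂t + ∑_{a=1}^{2} [ v_a ∂I/∂x_a + (−F'(t)v_a + e^{−2F(t)}x_a^{−3} + x_a) ∂I/∂v_a ] = 0, and (ii) x₁ ∂I/∂v₁ + x₂ ∂I/∂v₂ = 0, at every such point. Consequently, I is a common first integral of the time-prolongations X̃_ω of all the time-dependent vector fields Y_ω = v∂/∂x + (−F'v + e^{−2F}x^{−3} + ω²x)∂/∂v associated with the family of dissipative Milne–Pinney equations ẍ = −F'ẋ + ω²x + e^{−2F}x^{−3}. -/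

import Mathlib

set_option maxHeartbeats 1000000


/-- `I(t, x₁, v₁, x₂, v₂) = e^{2F(t)}(x₁v₂ − x₂v₁)² + (x₁/x₂)² + (x₂/x₁)²`, on `ℝ⁵` with
coordinates `(t, x₁, v₁, x₂, v₂)` indexed `0,…,4`. -/
noncomputable def mpI (F : ℝ → ℝ) : (Fin 5 → ℝ) → ℝ := fun p =>
  Real.exp (2 * F (p 0)) * (p 1 * p 4 - p 3 * p 2) ^ 2
    + (p 1 / p 3) ^ 2 + (p 3 / p 1) ^ 2

/-- For smooth `F`, the function `I = e^{2F(t)}(x₁v₂ − x₂v₁)² + (x₁/x₂)² + (x₂/x₁)²`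
satisfies, at every point with `x₁ ≠ 0` and `x₂ ≠ 0`:
(i) `∂I/∂t + ∑_{a=1,2} [v_a ∂I/∂x_a + (−F'v_a + e^{−2F}x_a^{−3} + x_a) ∂I/∂v_a] = 0`;
(ii) `x₁ ∂I/∂v₁ + x₂ ∂I/∂v₂ = 0`; and consequently, for every `ω : ℝ → ℝ`,
`∂I/∂t + ∑_{a=1,2} [v_a ∂I/∂x_a + (−F'v_a + e^{−2F}x_a^{−3} + ω²x_a) ∂I/∂v_a] = 0`,
i.e. `I` is a common first integral of the time-prolongations `X̃_ω` of all the
time-dependent vector fields `Y_ω = v∂/∂x + (−F'v + e^{−2F}x^{−3} + ω²x)∂/∂v` associated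
with the family of dissipative Milne–Pinney equations `ẍ = −F'ẋ + ω²x + e^{−2F}x^{−3}`. -/
theorem mpI_first_integral (F : ℝ → ℝ) (hF : ContDiff ℝ (⊤ : ℕ∞) F) :
    ∀ p : Fin 5 → ℝ, p 1 ≠ 0 → p 3 ≠ 0 →
      (fderiv ℝ (mpI F) p (Pi.single 0 1)
          + (p 2 * fderiv ℝ (mpI F) p (Pi.single 1 1)
            + (-(deriv F (p 0)) * p 2 + Real.exp (-(2 * F (p 0))) * ((p 1) ^ 3)⁻¹ + p 1)
              * fderiv ℝ (mpI F) p (Pi.single 2 1))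
          + (p 4 * fderiv ℝ (mpI F) p (Pi.single 3 1)
            + (-(deriv F (p 0)) * p 4 + Real.exp (-(2 * F (p 0))) * ((p 3) ^ 3)⁻¹ + p 3)
              * fderiv ℝ (mpI F) p (Pi.single 4 1)) = 0)
      ∧ (p 1 * fderiv ℝ (mpI F) p (Pi.single 2 1)
          + p 3 * fderiv ℝ (mpI F) p (Pi.single 4 1) = 0)
      ∧ (∀ ω : ℝ → ℝ,
          fderiv ℝ (mpI F) p (Pi.single 0 1)
            + (p 2 * fderiv ℝ (mpI F) p (Pi.single 1 1)
              + (-(deriv F (p 0)) * p 2 + Real.exp (-(2 * F (p 0))) * ((p 1) ^ 3)⁻¹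
                  + (ω (p 0)) ^ 2 * p 1)
                * fderiv ℝ (mpI F) p (Pi.single 2 1))
            + (p 4 * fderiv ℝ (mpI F) p (Pi.single 3 1)
              + (-(deriv F (p 0)) * p 4 + Real.exp (-(2 * F (p 0))) * ((p 3) ^ 3)⁻¹
                  + (ω (p 0)) ^ 2 * p 3)
                * fderiv ℝ (mpI F) p (Pi.single 4 1)) = 0) := by
  intro p h1 h3
  have h0 := hasFDerivAt_apply (𝕜 := ℝ) (0 : Fin 5) p
  have hc1 := hasFDerivAt_apply (𝕜 := ℝ) (1 : Fin 5) p
  have hc2 := hasFDerivAt_apply (𝕜 := ℝ) (2 : Fin 5) p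
  have hc3 := hasFDerivAt_apply (𝕜 := ℝ) (3 : Fin 5) p
  have hc4 := hasFDerivAt_apply (𝕜 := ℝ) (4 : Fin 5) p
  have hFd : HasDerivAt F (deriv F (p 0)) (p 0) :=
    (hF.differentiable (by simp) (p 0)).hasDerivAt
  have hFt : HasFDerivAt (fun q : Fin 5 → ℝ => F (q 0))
      (deriv F (p 0) • ContinuousLinearMap.proj (0 : Fin 5)) p :=
    hFd.comp_hasFDerivAt p h0
  have h2F := hFt.const_mul (2:ℝ)
  have hexp := (Real.hasDerivAt_exp (2 * F (p 0))).comp_hasFDerivAt p h2F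
  have hW := (hc1.mul hc4).sub (hc3.mul hc2)
  have hW2 := (hasDerivAt_pow 2 (p 1 * p 4 - p 3 * p 2)).comp_hasFDerivAt p hW
  have hA := hexp.mul hW2
  have hi3 := (hasDerivAt_inv h3).comp_hasFDerivAt p hc3
  have hi1 := (hasDerivAt_inv h1).comp_hasFDerivAt p hc1
  have hB := (hasDerivAt_pow 2 (p 1 * (p 3)⁻¹)).comp_hasFDerivAt p (hc1.mul hi3)
  have hC := (hasDerivAt_pow 2 (p 3 * (p 1)⁻¹)).comp_hasFDerivAt p (hc3.mul hi1)
  have hI := (hA.add hB).add hC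
  have heq : mpI F = fun x : Fin 5 → ℝ =>
      (Real.exp ∘ fun y : Fin 5 → ℝ => 2 * F (y 0)) x
          * ((fun x : ℝ => x ^ 2) ∘ fun x : Fin 5 → ℝ => x 1 * x 4 - x 3 * x 2) x
        + ((fun x : ℝ => x ^ 2) ∘ fun y : Fin 5 → ℝ =>
            y 1 * ((fun y : ℝ => y⁻¹) ∘ fun f : Fin 5 → ℝ => f 3) y) x
        + ((fun x : ℝ => x ^ 2) ∘ fun y : Fin 5 → ℝ =>
            y 3 * ((fun y : ℝ => y⁻¹) ∘ fun f : Fin 5 → ℝ => f 1) y) x := by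
    funext q; simp [mpI, Function.comp, div_eq_mul_inv]
  rw [heq]; erw [hI.fderiv]
  simp only [ContinuousLinearMap.add_apply, ContinuousLinearMap.smul_apply,
    ContinuousLinearMap.sub_apply, ContinuousLinearMap.proj_apply, Pi.single_apply,
    smul_eq_mul]
  simp only [Fin.isValue, Fin.reduceEq, if_true, if_false, reduceIte,
    Pi.single_eq_same, one_mul, mul_one, mul_zero, zero_mul, add_zero, zero_add,
    sub_zero, zero_sub, neg_zero, Nat.cast_ofNat]
  simp only [Real.exp_neg, Function.comp_apply, Pi.mul_apply, Pi.sub_apply]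
  have hEne : Real.exp (2 * F (p 0)) ≠ 0 := (Real.exp_pos _).ne'
  refine ⟨?_, ?_, fun ω => ?_⟩ <;> field_simp <;> ring_nf <;> (try field_simp) <;> ring
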